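/- Let S be a social network whose underlying graph is a simple directed cycle. Then the associated social network game has the uniform finite improvement property: there is a scheduler f such that every improvement path conforming to f is finite. -/

import Mathlib

open Finset

/-- A social network: a finite weighted directed graph together with product
assignments and thresholds.  `nbr i` is the set `N(i)` of in-neighbours of `i`. -/
structure SN (V P : Type) [Fintype V] [DecidableEq V] [DecidableEq P] where
  nbr : V → Finset V
  w : V → V → ℝ
  prod : V → Finset P
  θ : V → P → ℝ
  no_self : ∀ i, i ∉ nbr i
  w_nonneg : ∀ i j, 0 ≤ w i j
  w_le_one : ∀ i j, w i j ≤ 1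
  sum_w_le_one : ∀ i, (nbr i).Nonempty → ∑ j ∈ nbr i, w j i ≤ 1
  prod_nonempty : ∀ i, (prod i).Nonempty
  θ_pos : ∀ i t, 0 < θ i t
  θ_le_one : ∀ i t, θ i t ≤ 1

variable {V P : Type} [Fintype V] [DecidableEq V] [DecidableEq P]

/-- A source node: a node with no incoming edges. -/
def SN.isSource (S : SN V P) (i : V) : Prop := S.nbr i = ∅

/-- The payoff of player `i` in the joint strategy `s` (`none` is the null strategy `t₀`,
`c0 > 0` is the constant payoff of source nodes adopting a product). -/
def SN.payoff (S : SN V P) (c0 : ℝ) (s : V → Option P) (i : V) : ℝ :=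
  match s i with
  | none => 0
  | some t =>
      if S.nbr i = ∅ then c0
      else (∑ j ∈ (S.nbr i).filter (fun j => s j = some t), S.w j i) - S.θ i t

/-- A joint strategy is valid if every player only uses products from his product set. -/
def SN.valid (S : SN V P) (s : V → Option P) : Prop :=
  ∀ i t, s i = some t → t ∈ S.prod i

/-- The strategy `a` belongs to the strategy set `P(i) ∪ {t₀}` of player `i`. -/
def SN.allowed (S : SN V P) (i : V) (a : Option P) : Prop :=
  ∀ t, a = some t → t ∈ S.prod i

/-- (Pure) Nash equilibrium of the social network game. -/
def SN.NE (S : SN V P) (c0 : ℝ) (s : V → Option P) : Prop :=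
  S.valid s ∧ ∀ i a, S.allowed i a →
    S.payoff c0 (Function.update s i a) i ≤ S.payoff c0 s i

/-- Player `i` can strictly improve his payoff in `s` (i.e. `s i` is not a best
response to `s₋ᵢ`). -/
def SN.improvable (S : SN V P) (c0 : ℝ) (s : V → Option P) (i : V) : Prop :=
  ∃ a, S.allowed i a ∧ S.payoff c0 s i < S.payoff c0 (Function.update s i a) i

/-- A scheduler: at every joint strategy that is not a Nash equilibrium it
selects a player who is not playing a best response. -/
def SN.Scheduler (S : SN V P) (c0 : ℝ) (f : (V → Option P) → V) : Prop :=
  ∀ s, (∃ i, S.improvable c0 s i) → S.improvable c0 s (f s)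

/-- The uniform FIP: there is a scheduler such that every improvement path that
conforms to it is finite, i.e. there is no infinite conforming improvement
sequence. -/
def SN.UniformFIP (S : SN V P) (c0 : ℝ) : Prop :=
  ∃ f, S.Scheduler c0 f ∧
    ¬ ∃ ρ : ℕ → (V → Option P), S.valid (ρ 0) ∧
        ∀ k, ∃ a, S.allowed (f (ρ k)) a ∧
          ρ (k + 1) = Function.update (ρ k) (f (ρ k)) a ∧
          S.payoff c0 (ρ k) (f (ρ k)) < S.payoff c0 (ρ (k + 1)) (f (ρ k))

open Finset
section
variable {P : Type} [DecidableEq P]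

private lemma zero_sub_one' {n : ℕ} : (0 : Fin (n+2)) - 1 = Fin.last (n+1) := by
  apply Fin.ext; rw [Fin.coe_sub_one]; simp

private lemma finite_strict (q : ℕ → ℝ) (F : Finset ℝ) (hF : ∀ k, q k ∈ F)
    (M : Set ℕ) (hmono : ∀ k, q k ≤ q (k + 1)) (hstrict : ∀ k ∈ M, q k < q (k + 1)) :
    M.Finite := by
  have hmono' : Monotone q := monotone_nat_of_le_succ hmono
  have hinj : Set.InjOn q M := by
    intro k1 h1 k2 h2 heq
    by_contra hne
    rcases lt_or_gt_of_ne hne with h | h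
    · have := lt_of_lt_of_le (hstrict k1 h1) (hmono' (Nat.succ_le_of_lt h))
      rw [heq] at this; exact lt_irrefl _ this
    · have := lt_of_lt_of_le (hstrict k2 h2) (hmono' (Nat.succ_le_of_lt h))
      rw [heq] at this; exact lt_irrefl _ this
  have himg : (q '' M).Finite := (F.finite_toSet).subset (by rintro x ⟨k, _, rfl⟩; exact hF k)
  exact Set.Finite.of_finite_image himg hinj

private lemma exists_bound {M : Set ℕ} (h : M.Finite) : ∃ K, ∀ k, K ≤ k → k ∉ M := by
  obtain ⟨B, hB⟩ := h.bddAbove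
  exact ⟨B + 1, fun k hk hkM => by have := hB hkM; omega⟩

private lemma SNaux.payoff_none {n : ℕ} (S : SN (Fin (n+2)) P) (c0 : ℝ)
    (s : Fin (n+2) → Option P) (i : Fin (n+2)) (h : s i = none) :
    S.payoff c0 s i = 0 := by
  simp [SN.payoff, h]

private lemma SNaux.pred_ne {n : ℕ} (S : SN (Fin (n+2)) P)
    (hcyc : ∀ i, S.nbr i = {i - 1}) (i : Fin (n+2)) : i - 1 ≠ i := by
  have h := S.no_self i
  rw [hcyc] at h
  intro he
  exact h (by rw [he]; exact Finset.mem_singleton_self i)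

private lemma SNaux.payoff_some {n : ℕ} (S : SN (Fin (n+2)) P) (c0 : ℝ)
    (hcyc : ∀ i, S.nbr i = {i - 1}) (s : Fin (n+2) → Option P) (i : Fin (n+2)) (t : P)
    (h : s i = some t) :
    S.payoff c0 s i = (if s (i - 1) = some t then S.w (i - 1) i else 0) - S.θ i t := by
  classical
  simp only [SN.payoff, h]
  rw [if_neg (by rw [hcyc]; exact Finset.singleton_ne_empty _), hcyc]
  by_cases hp : s (i - 1) = some t
  · rw [Finset.filter_singleton, if_pos hp, Finset.sum_singleton, if_pos hp]
  · rw [Finset.filter_singleton, if_neg hp, Finset.sum_empty, if_neg hp]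

private lemma SNaux.pred_of_not_improvable {n : ℕ} (S : SN (Fin (n+2)) P) (c0 : ℝ)
    (hcyc : ∀ i, S.nbr i = {i - 1}) (s : Fin (n+2) → Option P) (i : Fin (n+2)) (t : P)
    (h : s i = some t) (hni : ¬ S.improvable c0 s i) :
    s (i - 1) = some t := by
  by_contra hne
  apply hni
  refine ⟨none, fun t' ht' => by simp at ht', ?_⟩
  have h1 : S.payoff c0 (Function.update s i none) i = 0 :=
    SNaux.payoff_none S c0 _ i (Function.update_self i none s)
  rw [SNaux.payoff_some S c0 hcyc s i t h, if_neg hne, h1]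
  have := S.θ_pos i t; linarith

private lemma SNaux.chain {n : ℕ} (S : SN (Fin (n+2)) P) (c0 : ℝ)
    (hcyc : ∀ i, S.nbr i = {i - 1}) (s : Fin (n+2) → Option P)
    (hmin : ∀ j, S.improvable c0 s j → j = Fin.last (n+1)) :
    ∀ (m : ℕ) (j : Fin (n+2)), j.val ≤ m → ∀ t, s j = some t → s (Fin.last (n+1)) = some t := by
  intro m
  induction m with
  | zero =>
    intro j hj t ht
    have hj0 : j = 0 := Fin.ext (Nat.le_zero.mp hj)
    have hl : j ≠ Fin.last (n+1) := by
      rw [hj0]; intro h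
      have := congrArg Fin.val h
      simp [Fin.last] at this
    have hni : ¬ S.improvable c0 s j := fun hh => hl (hmin j hh)
    have hpred := SNaux.pred_of_not_improvable S c0 hcyc s j t ht hni
    rwa [hj0, zero_sub_one'] at hpred
  | succ m ih =>
    intro j hj t ht
    by_cases hl : j = Fin.last (n+1)
    · rwa [hl] at ht
    · have hni : ¬ S.improvable c0 s j := fun hh => hl (hmin j hh)
      have hpred := SNaux.pred_of_not_improvable S c0 hcyc s j t ht hni
      by_cases h0 : j = 0
      · rwa [h0, zero_sub_one'] at hpred
      · refine ih (j - 1) ?_ t hpred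
        have h1 : (j - 1).val = j.val - 1 := by rw [Fin.coe_sub_one, if_neg h0]
        have h2 : j.val ≠ 0 := fun h => h0 (Fin.ext h)
        omega
end

/-- if the underlying graph of a social network is a simple
directed cycle `0 → 1 → ⋯ → (n+1) → 0` (each node's unique in-neighbour is its
predecessor), then the associated game has the uniform FIP. -/
theorem uniformFIP_of_cycle {n : ℕ} (S : SN (Fin (n + 2)) P) (c0 : ℝ) (hc0 : 0 < c0)
    (hcyc : ∀ i, S.nbr i = {i - 1}) :
    S.UniformFIP c0 := by
  classical
  set F : (Fin (n+2) → Option P) → Fin (n+2) := fun s =>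
    if h : (Finset.univ.filter (fun i => S.improvable c0 s i)).Nonempty
    then (Finset.univ.filter (fun i => S.improvable c0 s i)).min' h else 0 with hFdef
  have hFspec : ∀ (s : Fin (n+2) → Option P)
      (h : (Finset.univ.filter (fun i => S.improvable c0 s i)).Nonempty),
      F s = (Finset.univ.filter (fun i => S.improvable c0 s i)).min' h := by
    intro s h
    simp only [hFdef]
    exact dif_pos h
  have hFmin : ∀ (s : Fin (n+2) → Option P) (j : Fin (n+2)),
      S.improvable c0 s j → F s ≤ j := by
    intro s j hj
    have hne : (Finset.univ.filter (fun i => S.improvable c0 s i)).Nonempty :=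
      ⟨j, Finset.mem_filter.2 ⟨Finset.mem_univ _, hj⟩⟩
    rw [hFspec s hne]
    exact Finset.min'_le _ _ (Finset.mem_filter.2 ⟨Finset.mem_univ _, hj⟩)
  have hFimp : S.Scheduler c0 F := by
    intro s hs
    obtain ⟨i, hi⟩ := hs
    have hne : (Finset.univ.filter (fun i => S.improvable c0 s i)).Nonempty :=
      ⟨i, Finset.mem_filter.2 ⟨Finset.mem_univ _, hi⟩⟩
    rw [hFspec s hne]
    exact (Finset.mem_filter.1 (Finset.min'_mem _ hne)).2
  refine ⟨F, hFimp, ?_⟩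
  rintro ⟨ρ, hval0, hstep⟩
  choose a hall hupd hlt using hstep
  -- basic step facts
  have hother : ∀ k (i : Fin (n+2)), i ≠ F (ρ k) → ρ (k+1) i = ρ k i := by
    intro k i hi
    rw [hupd k]
    exact Function.update_of_ne hi _ _
  have hself : ∀ k, ρ (k+1) (F (ρ k)) = a k := by
    intro k
    rw [hupd k]
    exact Function.update_self _ _ _
  have hvalid : ∀ k, S.valid (ρ k) := by
    intro k
    induction k with
    | zero => exact hval0
    | succ k ih =>
      intro i t hit
      rw [hupd k] at hit
      by_cases hi : i = F (ρ k)
      · subst hi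
        rw [Function.update_self] at hit
        exact hall k t hit
      · rw [Function.update_of_ne hi] at hit
        exact ih i t hit
  have himp : ∀ k, S.improvable c0 (ρ k) (F (ρ k)) := by
    intro k
    exact ⟨a k, hall k, by rw [← hupd k]; exact hlt k⟩
  -- minimality at a move of `last`
  have hmin_at : ∀ k, F (ρ k) = Fin.last (n+1) →
      ∀ j, S.improvable c0 (ρ k) j → j = Fin.last (n+1) := by
    intro k hk j hj
    exact le_antisymm (Fin.le_last j) (hk ▸ hFmin (ρ k) j hj)
  -- at a move of last, its current strategy is a product
  have hcur : ∀ k, F (ρ k) = Fin.last (n+1) → ∃ t, ρ k (Fin.last (n+1)) = some t := by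
    intro k hk
    cases hc : ρ k (Fin.last (n+1)) with
    | some t => exact ⟨t, rfl⟩
    | none =>
      exfalso
      obtain ⟨b, hb, hblt⟩ := hk ▸ himp k
      have h0 : S.payoff c0 (ρ k) (Fin.last (n+1)) = 0 := SNaux.payoff_none S c0 _ _ hc
      cases hbv : b with
      | none =>
        rw [hbv] at hblt
        have := SNaux.payoff_none S c0 (Function.update (ρ k) (Fin.last (n+1)) none)
          (Fin.last (n+1)) (Function.update_self _ _ _)
        rw [this, h0] at hblt
        exact lt_irrefl _ hblt
      | some t₂ =>
        rw [hbv] at hblt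
        have hupdv : (Function.update (ρ k) (Fin.last (n+1)) (some t₂)) (Fin.last (n+1)) = some t₂ :=
          Function.update_self _ _ _
        have hpe : (Function.update (ρ k) (Fin.last (n+1)) (some t₂)) (Fin.last (n+1) - 1)
            = ρ k (Fin.last (n+1) - 1) :=
          Function.update_of_ne (SNaux.pred_ne S hcyc _) _ _
        rw [SNaux.payoff_some S c0 hcyc _ _ t₂ hupdv, hpe, h0] at hblt
        by_cases hp : ρ k (Fin.last (n+1) - 1) = some t₂
        · have hch := SNaux.chain S c0 hcyc (ρ k) (hmin_at k hk)
            (Fin.last (n+1) - 1).val (Fin.last (n+1) - 1) le_rfl t₂ hp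
          rw [hc] at hch
          exact absurd hch (by simp)
        · rw [if_neg hp] at hblt
          have := S.θ_pos (Fin.last (n+1)) t₂
          linarith
  -- potential for last
  set q : ℕ → ℝ := fun k => (ρ k (Fin.last (n+1))).elim 0 (fun t => -(S.θ (Fin.last (n+1)) t))
    with hqdef
  have hqstep : ∀ k, q k ≤ q (k+1) ∧ (F (ρ k) = Fin.last (n+1) → q k < q (k+1)) := by
    intro k
    by_cases hk : F (ρ k) = Fin.last (n+1)
    · obtain ⟨t, ht⟩ := hcur k hk
      have hnew : ρ (k+1) (Fin.last (n+1)) = a k := by rw [← hk]; exact hself k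
      have hstrict : q k < q (k+1) := by
        cases hak : a k with
        | none =>
          have hq1 : q (k+1) = 0 := by simp [hqdef, hnew, hak]
          have hq0 : q k = -(S.θ (Fin.last (n+1)) t) := by simp [hqdef, ht]
          rw [hq0, hq1]
          have := S.θ_pos (Fin.last (n+1)) t
          linarith
        | some t₂ =>
          have hlt' := hlt k
          rw [hk] at hlt'
          rw [SNaux.payoff_some S c0 hcyc (ρ k) (Fin.last (n+1)) t ht] at hlt'
          rw [SNaux.payoff_some S c0 hcyc (ρ (k+1)) (Fin.last (n+1)) t₂
            (by rw [hnew, hak])] at hlt'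
          have hpe : ρ (k+1) (Fin.last (n+1) - 1) = ρ k (Fin.last (n+1) - 1) :=
            hother k _ (by rw [hk]; exact SNaux.pred_ne S hcyc _)
          rw [hpe] at hlt'
          by_cases hp : ρ k (Fin.last (n+1) - 1) = some t₂
          · exfalso
            have hch := SNaux.chain S c0 hcyc (ρ k) (hmin_at k hk)
              (Fin.last (n+1) - 1).val (Fin.last (n+1) - 1) le_rfl t₂ hp
            rw [ht] at hch
            have htt : t = t₂ := Option.some.inj hch
            rw [htt] at hlt'
            rw [if_pos hp] at hlt'
            exact lt_irrefl _ hlt'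
          · rw [if_neg hp] at hlt'
            have hge : (0:ℝ) ≤ (if ρ k (Fin.last (n+1) - 1) = some t
                then S.w (Fin.last (n+1) - 1) (Fin.last (n+1)) else 0) := by
              split
              · exact S.w_nonneg _ _
              · exact le_refl 0
            have hq1 : q (k+1) = -(S.θ (Fin.last (n+1)) t₂) := by simp [hqdef, hnew, hak]
            have hq0 : q k = -(S.θ (Fin.last (n+1)) t) := by simp [hqdef, ht]
            rw [hq0, hq1]
            linarith
      exact ⟨le_of_lt hstrict, fun _ => hstrict⟩
    · have heq : ρ (k+1) (Fin.last (n+1)) = ρ k (Fin.last (n+1)) :=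
        hother k _ (fun h => hk h.symm)
      constructor
      · simp only [hqdef, heq]; exact le_refl _
      · intro h; exact absurd h hk
  have hMlast : {k | F (ρ k) = Fin.last (n+1)}.Finite := by
    refine finite_strict q (insert (0:ℝ) ((S.prod (Fin.last (n+1))).image
      (fun t => -(S.θ (Fin.last (n+1)) t)))) ?_ _ (fun k => (hqstep k).1)
      (fun k hk => (hqstep k).2 hk)
    intro k
    cases hc : ρ k (Fin.last (n+1)) with
    | none => simp [hqdef, hc]
    | some t =>
      have hmem : t ∈ S.prod (Fin.last (n+1)) := hvalid k _ t hc
      simp only [hqdef, hc, Option.elim_some]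
      exact Finset.mem_insert_of_mem (Finset.mem_image.2 ⟨t, hmem, rfl⟩)
  obtain ⟨K0, hK0⟩ := exists_bound hMlast
  -- a player whose predecessor is eventually constant eventually never moves
  have hsettle : ∀ (i : Fin (n+2)) (K : ℕ),
      (∀ k, K ≤ k → ρ k (i - 1) = ρ K (i - 1)) →
      ∃ K', K ≤ K' ∧ ∀ k, K' ≤ k → F (ρ k) ≠ i := by
    intro i K hconst
    set c := ρ K (i - 1) with hc
    set g : Option P → ℝ := fun b => b.elim 0
      (fun t => (if c = some t then S.w (i-1) i else 0) - S.θ i t) with hg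
    have hpay : ∀ k, K ≤ k → S.payoff c0 (ρ k) i = g (ρ k i) := by
      intro k hk
      cases hik : ρ k i with
      | none => rw [SNaux.payoff_none S c0 _ i hik]; simp [hg, hik]
      | some t =>
        rw [SNaux.payoff_some S c0 hcyc _ i t hik, hconst k hk]
        simp [hg]
    have hmono : ∀ m, g (ρ (K + m) i) ≤ g (ρ (K + m + 1) i) ∧
        (F (ρ (K + m)) = i → g (ρ (K + m) i) < g (ρ (K + m + 1) i)) := by
      intro m
      by_cases hFi : F (ρ (K + m)) = i
      · have h1 := hlt (K + m)
        rw [hFi] at h1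
        rw [hpay (K + m) (Nat.le_add_right _ _), hpay (K + m + 1) (by omega)] at h1
        exact ⟨le_of_lt h1, fun _ => h1⟩
      · have : ρ (K + m + 1) i = ρ (K + m) i := hother (K + m) i (fun h => hFi h.symm)
        rw [this]
        exact ⟨le_refl _, fun h => absurd h hFi⟩
    have hfin : {m | F (ρ (K + m)) = i}.Finite := by
      refine finite_strict (fun m => g (ρ (K + m) i))
        ((insert none ((S.prod i).image some)).image g) ?_ _
        (fun m => (hmono m).1) (fun m hm => (hmono m).2 hm)
      intro m
      refine Finset.mem_image.2 ⟨ρ (K + m) i, ?_, rfl⟩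
      cases hik : ρ (K + m) i with
      | none => exact Finset.mem_insert_self _ _
      | some t =>
        exact Finset.mem_insert_of_mem (Finset.mem_image.2 ⟨t, hvalid (K + m) i t hik, rfl⟩)
    obtain ⟨B, hB⟩ := exists_bound hfin
    refine ⟨K + B, Nat.le_add_right _ _, fun k hk hFk => ?_⟩
    have hm : K ≤ k := by omega
    have hmem : (k - K) ∈ {m | F (ρ (K + m)) = i} := by
      simp only [Set.mem_setOf_eq]
      rw [Nat.add_sub_cancel' hm]
      exact hFk
    exact hB (k - K) (by omega) hmem
  -- settle all players one after another
  have hall2 : ∀ m : ℕ, m ≤ n + 1 → ∃ K, ∀ k, K ≤ k →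
      ∀ j : Fin (n+2), (j = Fin.last (n+1) ∨ j.val < m) → F (ρ k) ≠ j := by
    intro m
    induction m with
    | zero =>
      intro _
      refine ⟨K0, fun k hk j hj => ?_⟩
      rcases hj with hj | hj
      · rw [hj]
        exact fun h => hK0 k hk h
      · omega
    | succ m ih =>
      intro hm
      obtain ⟨K, hK⟩ := ih (by omega)
      set i : Fin (n+2) := ⟨m, by omega⟩ with hidef
      have hpredcov : i - 1 = Fin.last (n+1) ∨ (i - 1).val < m := by
        by_cases h0 : m = 0
        · left
          have : i = 0 := Fin.ext (by simp [hidef, h0])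
          rw [this, zero_sub_one']
        · right
          have hi0 : i ≠ 0 := by
            intro h
            have := congrArg Fin.val h
            simp [hidef] at this
            exact h0 this
          rw [Fin.coe_sub_one, if_neg hi0]
          simp only [hidef]
          omega
      have hconst : ∀ k, K ≤ k → ρ k (i - 1) = ρ K (i - 1) := by
        intro k hk
        induction k with
        | zero =>
          have : K = 0 := Nat.le_zero.mp hk
          rw [this]
        | succ k ihk =>
          rcases Nat.lt_or_ge K (k+1) with h | h
          · have hk' : K ≤ k := by omega
            rw [hother k (i - 1) (fun he => hK k hk' (i - 1) hpredcov he.symm), ihk hk']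
          · have : K = k + 1 := by omega
            rw [this]
      obtain ⟨K', hKK', hK'⟩ := hsettle i K hconst
      refine ⟨K', fun k hk j hj => ?_⟩
      rcases hj with hj | hj
      · exact hK k (le_trans hKK' hk) j (Or.inl hj)
      · by_cases hjm : j.val = m
        · have : j = i := Fin.ext (by simp [hidef, hjm])
          rw [this]
          exact hK' k hk
        · exact hK k (le_trans hKK' hk) j (Or.inr (by omega))
  obtain ⟨K, hK⟩ := hall2 (n + 1) le_rfl
  have hcov : F (ρ K) = Fin.last (n+1) ∨ (F (ρ K)).val < n + 1 := by
    rcases Nat.lt_or_ge (F (ρ K)).val (n+1) with h | h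
    · exact Or.inr h
    · left
      apply Fin.ext
      have := (F (ρ K)).isLt
      simp only [Fin.val_last]
      omega
  exact hK K le_rfl (F (ρ K)) hcov rfl
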